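/- Let A be a strongly connected signed interaction matrix. Then: (i) A induces a nontrivial polarization if and only if A is opposition bipartite and aperiodic; (ii) A is divergent if and only if A is reverse opposition bipartite; (iii) A induces a neutral consensus if and only if A is neither opposition bipartite nor reverse opposition bipartite. -/

import Mathlib

open Filter

variable {n : ℕ}

/-- Entrywise absolute value of a matrix. -/
def absMat (A : Matrix (Fin n) (Fin n) ℝ) : Matrix (Fin n) (Fin n) ℝ :=
  A.map fun x => |x|

/-- `A` is strongly connected: for all `i j` there is `k ≥ 1` with `(|A|^k)_{ij} > 0`. -/
def StronglyConnected (A : Matrix (Fin n) (Fin n) ℝ) : Prop :=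
  ∀ i j, ∃ k : ℕ, 1 ≤ k ∧ 0 < (absMat A ^ k) i j

/-- `A` is aperiodic: for each `i`, the gcd of `{k ≥ 1 : (|A|^k)_{ii} > 0}` is `1`,
phrased as: every common divisor of that set equals `1`. -/
def Aperiodic (A : Matrix (Fin n) (Fin n) ℝ) : Prop :=
  ∀ i, ∀ d : ℕ, (∀ k : ℕ, 1 ≤ k → 0 < (absMat A ^ k) i i → d ∣ k) → d = 1

/-- `A` is opposition bipartite: a two-set partition (given by `S` and its
complement) with nonnegative entries within sets and nonpositive across. -/
def OppBip (A : Matrix (Fin n) (Fin n) ℝ) : Prop :=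
  ∃ S : Set (Fin n), ∀ i j,
    (((i ∈ S ∧ j ∈ S) ∨ (i ∉ S ∧ j ∉ S)) → 0 ≤ A i j) ∧
    (((i ∈ S ∧ j ∉ S) ∨ (i ∉ S ∧ j ∈ S)) → A i j ≤ 0)

/-- `A` is reverse opposition bipartite: nonpositive entries within sets and
nonnegative across. -/
def RevOppBip (A : Matrix (Fin n) (Fin n) ℝ) : Prop :=
  ∃ S : Set (Fin n), ∀ i j,
    (((i ∈ S ∧ j ∈ S) ∨ (i ∉ S ∧ j ∉ S)) → A i j ≤ 0) ∧
    (((i ∈ S ∧ j ∉ S) ∨ (i ∉ S ∧ j ∈ S)) → 0 ≤ A i j)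

/-- `A` is divergent: some initial vector has no limit under iteration. -/
def Divergent (A : Matrix (Fin n) (Fin n) ℝ) : Prop :=
  ∃ b₀ : Fin n → ℝ, ¬ ∃ L : Fin n → ℝ,
    Tendsto (fun t => (A ^ t).mulVec b₀) atTop (nhds L)

/-- `A` induces a neutral consensus: iterates converge to `0` from every start. -/
def NeutralConsensus (A : Matrix (Fin n) (Fin n) ℝ) : Prop :=
  ∀ b₀ : Fin n → ℝ, Tendsto (fun t => (A ^ t).mulVec b₀) atTop (nhds 0)

/-- A vector is a polarization if its entries take at most two values. -/
def IsPolarization (p : Fin n → ℝ) : Prop :=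
  ∃ a b : ℝ, ∀ i, p i = a ∨ p i = b

/-- `A` induces a nontrivial polarization: from every start the limit exists
and is a polarization, and from some start the limit is nonzero. -/
def InducesNontrivialPolarization (A : Matrix (Fin n) (Fin n) ℝ) : Prop :=
  (∀ b₀ : Fin n → ℝ, ∃ L : Fin n → ℝ,
      Tendsto (fun t => (A ^ t).mulVec b₀) atTop (nhds L) ∧ IsPolarization L) ∧
  (∃ (b₀ L : Fin n → ℝ),
      Tendsto (fun t => (A ^ t).mulVec b₀) atTop (nhds L) ∧ L ≠ 0)


section Stmt12Aux

open Finset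

variable {A : Matrix (Fin n) (Fin n) ℝ}

lemma absMat_apply' (A : Matrix (Fin n) (Fin n) ℝ) (i j : Fin n) : absMat A i j = |A i j| := rfl

lemma absMat_nonneg (A : Matrix (Fin n) (Fin n) ℝ) (i j : Fin n) : 0 ≤ absMat A i j :=
  abs_nonneg _

lemma mulVec_apply' (A : Matrix (Fin n) (Fin n) ℝ) (v : Fin n → ℝ) (i : Fin n) :
    A.mulVec v i = ∑ j, A i j * v j := rfl

lemma absMat_pow_nonneg (A : Matrix (Fin n) (Fin n) ℝ) :
    ∀ (k : ℕ) (i j : Fin n), 0 ≤ (absMat A ^ k) i j := by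
  intro k
  induction k with
  | zero =>
      intro i j
      rw [pow_zero, Matrix.one_apply]
      split <;> norm_num
  | succ k ih =>
      intro i j
      rw [pow_succ, Matrix.mul_apply]
      exact Finset.sum_nonneg fun l _ => mul_nonneg (ih i l) (abs_nonneg _)

lemma absMat_pow_symm (hsym : A.IsSymm) :
    ∀ (k : ℕ) (i j : Fin n), (absMat A ^ k) i j = (absMat A ^ k) j i := by
  have h1 : (absMat A).IsSymm := by
    unfold Matrix.IsSymm
    ext i j
    simp only [Matrix.transpose_apply, absMat_apply']
    rw [hsym.apply j i]
  intro k i j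
  have h2 : ((absMat A) ^ k).IsSymm := by
    unfold Matrix.IsSymm
    have h1' : Matrix.transpose (absMat A) = absMat A := h1
    rw [Matrix.transpose_pow, h1']
  exact h2.apply j i

lemma exists_pos_entry (hrow : ∀ i, ∑ j, |A i j| = 1) (i : Fin n) : ∃ j, 0 < |A i j| := by
  by_contra h
  push_neg at h
  have h0 : ∑ j, |A i j| = 0 := le_antisymm (Finset.sum_nonpos fun j _ => h j)
    (Finset.sum_nonneg fun j _ => abs_nonneg _)
  rw [hrow i] at h0
  norm_num at h0

lemma pos_term_of_sum_pos {f : Fin n → ℝ} (hf : ∀ j, 0 ≤ f j) (h : 0 < ∑ j, f j) :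
    ∃ j, 0 < f j := by
  by_contra hc
  push_neg at hc
  have : ∑ j, f j = 0 := le_antisymm (Finset.sum_nonpos fun j _ => hc j)
    (Finset.sum_nonneg fun j _ => hf j)
  rw [this] at h
  exact lt_irrefl _ h

lemma eig_bound (hrow : ∀ i, ∑ j, |A i j| = 1) (μ : ℝ) (v : Fin n → ℝ) (hv : v ≠ 0)
    (h : A.mulVec v = μ • v) : |μ| ≤ 1 := by
  obtain ⟨j₀, hj₀⟩ := Function.ne_iff.mp hv
  obtain ⟨i, -, hi⟩ := Finset.exists_max_image Finset.univ (fun i => |v i|) ⟨j₀, Finset.mem_univ _⟩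
  have hvi : 0 < |v i| := lt_of_lt_of_le (abs_pos.mpr hj₀) (hi j₀ (Finset.mem_univ _))
  have key : |μ| * |v i| ≤ 1 * |v i| := by
    have h1 : A.mulVec v i = μ * v i := by rw [h]; rfl
    calc |μ| * |v i| = |μ * v i| := (abs_mul μ (v i)).symm
      _ = |∑ j, A i j * v j| := by rw [← h1]; rfl
      _ ≤ ∑ j, |A i j * v j| := Finset.abs_sum_le_sum_abs _ _
      _ = ∑ j, |A i j| * |v j| := by simp [abs_mul]
      _ ≤ ∑ j, |A i j| * |v i| := Finset.sum_le_sum fun j _ =>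
          mul_le_mul_of_nonneg_left (hi j (Finset.mem_univ _)) (abs_nonneg _)
      _ = 1 * |v i| := by rw [← Finset.sum_mul, hrow i]
  exact le_of_mul_le_mul_right key hvi

lemma sum_abs_eq_cases {x : Fin n → ℝ} (h : |∑ j, x j| = ∑ j, |x j|) (j : Fin n) :
    x j * (∑ i, x i) = |x j| * |∑ i, x i| := by
  have h1 : ∀ i ∈ Finset.univ, x i * (∑ i, x i) ≤ |x i| * |∑ i, x i| := fun i _ =>
    (le_abs_self _).trans_eq (abs_mul _ _)
  have h2 : ∑ i, x i * (∑ i, x i) = ∑ i, |x i| * |∑ i, x i| := by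
    rw [← Finset.sum_mul, ← Finset.sum_mul, ← h, ← abs_mul, abs_mul_self]
  exact (Finset.sum_eq_sum_iff_of_le h1).mp h2 j (Finset.mem_univ _)

lemma eig_abs (hsym : A.IsSymm) (hrow : ∀ i, ∑ j, |A i j| = 1) {c : ℝ} {v : Fin n → ℝ}
    (hc : c = 1 ∨ c = -1) (hv : A.mulVec v = c • v) :
    ∀ i, ∑ j, |A i j| * |v j| = |v i| := by
  have hc1 : |c| = 1 := by rcases hc with h | h <;> rw [h] <;> norm_num
  have hle : ∀ i, |v i| ≤ ∑ j, |A i j| * |v j| := by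
    intro i
    have h1 : A.mulVec v i = c * v i := by rw [hv]; rfl
    calc |v i| = |c * v i| := by rw [abs_mul, hc1, one_mul]
      _ = |∑ j, A i j * v j| := by rw [← h1]; rfl
      _ ≤ ∑ j, |A i j * v j| := Finset.abs_sum_le_sum_abs _ _
      _ = ∑ j, |A i j| * |v j| := by simp [abs_mul]
  have hsum : ∑ i, ∑ j, |A i j| * |v j| = ∑ i, |v i| := by
    rw [Finset.sum_comm]
    refine Finset.sum_congr rfl fun j _ => ?_
    rw [← Finset.sum_mul]
    have hcol : ∑ i, |A i j| = 1 := by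
      have : ∀ i, |A i j| = |A j i| := fun i => by rw [hsym.apply i j]
      rw [Finset.sum_congr rfl fun i _ => this i, hrow j]
    rw [hcol, one_mul]
  have := (Finset.sum_eq_sum_iff_of_le (fun i _ => hle i)).mp hsum.symm
  intro i
  exact (this i (Finset.mem_univ _)).symm

lemma eig_abs_pow {v : Fin n → ℝ} (habs : ∀ i, ∑ j, |A i j| * |v j| = |v i|) :
    ∀ (k : ℕ) (i : Fin n), ∑ j, (absMat A ^ k) i j * |v j| = |v i| := by
  intro k
  induction k with
  | zero =>
      intro i
      simp [Matrix.one_apply]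
  | succ k ih =>
      intro i
      rw [pow_succ']
      calc ∑ j, (absMat A * absMat A ^ k) i j * |v j|
          = ∑ j, (∑ l, absMat A i l * (absMat A ^ k) l j) * |v j| := by
            refine Finset.sum_congr rfl fun j _ => ?_
            rw [Matrix.mul_apply]
        _ = ∑ l, absMat A i l * (∑ j, (absMat A ^ k) l j * |v j|) := by
            simp only [Finset.sum_mul, Finset.mul_sum]
            rw [Finset.sum_comm]
            exact Finset.sum_congr rfl fun l _ => Finset.sum_congr rfl fun j _ => by ring
        _ = ∑ l, |A i l| * |v l| := by
            refine Finset.sum_congr rfl fun l _ => ?_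
            rw [ih l, absMat_apply']
        _ = |v i| := habs i

lemma eig_abs_pos (hsc : StronglyConnected A) {v : Fin n → ℝ} (hv : v ≠ 0)
    (habs : ∀ i, ∑ j, |A i j| * |v j| = |v i|) : ∀ i, 0 < |v i| := by
  obtain ⟨j₀, hj₀⟩ := Function.ne_iff.mp hv
  intro i
  obtain ⟨k, -, hkpos⟩ := hsc i j₀
  have hpow := eig_abs_pow habs k i
  have hterm : 0 < (absMat A ^ k) i j₀ * |v j₀| :=
    mul_pos hkpos (abs_pos.mpr hj₀)
  have hle : (absMat A ^ k) i j₀ * |v j₀| ≤ ∑ j, (absMat A ^ k) i j * |v j| :=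
    Finset.single_le_sum (fun j _ => mul_nonneg (absMat_pow_nonneg A k i j) (abs_nonneg _))
      (Finset.mem_univ j₀)
  rw [hpow] at hle
  exact lt_of_lt_of_le hterm hle

lemma eig_sign (hsym : A.IsSymm) (hrow : ∀ i, ∑ j, |A i j| = 1) (hsc : StronglyConnected A)
    {c : ℝ} {v : Fin n → ℝ} (hc : c = 1 ∨ c = -1) (hv : A.mulVec v = c • v) (hvne : v ≠ 0) :
    ∀ i j, A i j ≠ 0 → 0 < c * (A i j * (v i * v j)) := by
  have habs := eig_abs hsym hrow hc hv
  have hpos := eig_abs_pos hsc hvne habs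
  have hc1 : |c| = 1 := by rcases hc with h | h <;> rw [h] <;> norm_num
  intro i j hAij
  have hsi : ∑ l, A i l * v l = c * v i := by
    have : A.mulVec v i = c * v i := by rw [hv]; rfl
    rw [← this]; rfl
  have heq : |∑ l, A i l * v l| = ∑ l, |A i l * v l| := by
    rw [hsi, abs_mul, hc1, one_mul, ← habs i]
    refine Finset.sum_congr rfl fun l _ => (abs_mul _ _).symm
  have hkey := sum_abs_eq_cases heq j
  rw [hsi, abs_mul (A i j) (v j), abs_mul c (v i), hc1, one_mul] at hkey
  -- hkey : A i j * v j * (c * v i) = |A i j| * |v j| * |v i|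
  have hrhs : 0 < |A i j| * |v j| * |v i| :=
    mul_pos (mul_pos (abs_pos.mpr hAij) (hpos j)) (hpos i)
  rw [← hkey] at hrhs
  calc (0:ℝ) < A i j * v j * (c * v i) := hrhs
    _ = c * (A i j * (v i * v j)) := by ring

lemma pos_of_mul_pos_pos {a b : ℝ} (h : 0 < a * b) (hb : 0 < b) : 0 < a := by nlinarith

lemma neg_of_mul_pos_neg {a b : ℝ} (h : 0 < a * b) (hb : b < 0) : a < 0 := by nlinarith

lemma eig_oppBip (hsym : A.IsSymm) (hrow : ∀ i, ∑ j, |A i j| = 1) (hsc : StronglyConnected A)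
    {v : Fin n → ℝ} (hvne : v ≠ 0) (hv : A.mulVec v = v) : OppBip A := by
  have hv' : A.mulVec v = (1:ℝ) • v := by rw [one_smul]; exact hv
  have hsign := eig_sign hsym hrow hsc (Or.inl rfl) hv' hvne
  have hpos := eig_abs_pos hsc hvne (eig_abs hsym hrow (Or.inl rfl) hv')
  have hne0 : ∀ i, v i ≠ 0 := fun i => abs_pos.mp (hpos i)
  refine ⟨{i | 0 < v i}, fun i j => ⟨?_, ?_⟩⟩
  · rintro (⟨hi, hj⟩ | ⟨hi, hj⟩) <;>
      rcases eq_or_ne (A i j) 0 with h0 | h0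
    · rw [h0]
    · have h1 := hsign i j h0; rw [one_mul] at h1
      simp only [Set.mem_setOf_eq] at hi hj
      exact le_of_lt (pos_of_mul_pos_pos h1 (mul_pos hi hj))
    · rw [h0]
    · have h1 := hsign i j h0; rw [one_mul] at h1
      simp only [Set.mem_setOf_eq] at hi hj
      have hi' : v i < 0 := lt_of_le_of_ne (not_lt.mp hi) (hne0 i)
      have hj' : v j < 0 := lt_of_le_of_ne (not_lt.mp hj) (hne0 j)
      exact le_of_lt (pos_of_mul_pos_pos h1 (mul_pos_of_neg_of_neg hi' hj'))
  · rintro (⟨hi, hj⟩ | ⟨hi, hj⟩) <;>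
      rcases eq_or_ne (A i j) 0 with h0 | h0
    · rw [h0]
    · have h1 := hsign i j h0; rw [one_mul] at h1
      simp only [Set.mem_setOf_eq] at hi hj
      have hj' : v j < 0 := lt_of_le_of_ne (not_lt.mp hj) (hne0 j)
      exact le_of_lt (neg_of_mul_pos_neg h1 (mul_neg_of_pos_of_neg hi hj'))
    · rw [h0]
    · have h1 := hsign i j h0; rw [one_mul] at h1
      simp only [Set.mem_setOf_eq] at hi hj
      have hi' : v i < 0 := lt_of_le_of_ne (not_lt.mp hi) (hne0 i)
      exact le_of_lt (neg_of_mul_pos_neg h1 (mul_neg_of_neg_of_pos hi' hj))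

lemma eig_revOppBip (hsym : A.IsSymm) (hrow : ∀ i, ∑ j, |A i j| = 1) (hsc : StronglyConnected A)
    {v : Fin n → ℝ} (hvne : v ≠ 0) (hv : A.mulVec v = -v) : RevOppBip A := by
  have hv' : A.mulVec v = (-1:ℝ) • v := by rw [neg_one_smul]; exact hv
  have hsign := eig_sign hsym hrow hsc (Or.inr rfl) hv' hvne
  have hpos := eig_abs_pos hsc hvne (eig_abs hsym hrow (Or.inr rfl) hv')
  have hne0 : ∀ i, v i ≠ 0 := fun i => abs_pos.mp (hpos i)
  have hsign' : ∀ i j, A i j ≠ 0 → 0 < (-(A i j)) * (v i * v j) := by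
    intro i j h0
    have := hsign i j h0
    nlinarith [this]
  refine ⟨{i | 0 < v i}, fun i j => ⟨?_, ?_⟩⟩
  · rintro (⟨hi, hj⟩ | ⟨hi, hj⟩) <;>
      rcases eq_or_ne (A i j) 0 with h0 | h0
    · rw [h0]
    · have h1 := hsign' i j h0
      simp only [Set.mem_setOf_eq] at hi hj
      have := pos_of_mul_pos_pos h1 (mul_pos hi hj)
      linarith
    · rw [h0]
    · have h1 := hsign' i j h0
      simp only [Set.mem_setOf_eq] at hi hj
      have hi' : v i < 0 := lt_of_le_of_ne (not_lt.mp hi) (hne0 i)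
      have hj' : v j < 0 := lt_of_le_of_ne (not_lt.mp hj) (hne0 j)
      have := pos_of_mul_pos_pos h1 (mul_pos_of_neg_of_neg hi' hj')
      linarith
  · rintro (⟨hi, hj⟩ | ⟨hi, hj⟩) <;>
      rcases eq_or_ne (A i j) 0 with h0 | h0
    · rw [h0]
    · have h1 := hsign' i j h0
      simp only [Set.mem_setOf_eq] at hi hj
      have hj' : v j < 0 := lt_of_le_of_ne (not_lt.mp hj) (hne0 j)
      have := neg_of_mul_pos_neg h1 (mul_neg_of_pos_of_neg hi hj')
      linarith
    · rw [h0]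
    · have h1 := hsign' i j h0
      simp only [Set.mem_setOf_eq] at hi hj
      have hi' : v i < 0 := lt_of_le_of_ne (not_lt.mp hi) (hne0 i)
      have := neg_of_mul_pos_neg h1 (mul_neg_of_neg_of_pos hi' hj)
      linarith

lemma oppBip_sign (h : OppBip A) :
    ∃ s : Fin n → ℝ, (∀ i, s i = 1 ∨ s i = -1) ∧ ∀ i j, A i j = s i * s j * |A i j| := by
  classical
  obtain ⟨S, hS⟩ := h
  refine ⟨fun i => if i ∈ S then 1 else -1, fun i => by dsimp only; split <;> simp, ?_⟩
  intro i j
  dsimp only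
  by_cases hi : i ∈ S <;> by_cases hj : j ∈ S
  · rw [if_pos hi, if_pos hj, abs_of_nonneg ((hS i j).1 (Or.inl ⟨hi, hj⟩))]; ring
  · rw [if_pos hi, if_neg hj, abs_of_nonpos ((hS i j).2 (Or.inl ⟨hi, hj⟩))]; ring
  · rw [if_neg hi, if_pos hj, abs_of_nonpos ((hS i j).2 (Or.inr ⟨hi, hj⟩))]; ring
  · rw [if_neg hi, if_neg hj, abs_of_nonneg ((hS i j).1 (Or.inr ⟨hi, hj⟩))]; ring

lemma revOppBip_sign (h : RevOppBip A) :
    ∃ s : Fin n → ℝ, (∀ i, s i = 1 ∨ s i = -1) ∧ ∀ i j, A i j = -(s i * s j) * |A i j| := by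
  classical
  obtain ⟨S, hS⟩ := h
  refine ⟨fun i => if i ∈ S then 1 else -1, fun i => by dsimp only; split <;> simp, ?_⟩
  intro i j
  dsimp only
  by_cases hi : i ∈ S <;> by_cases hj : j ∈ S
  · rw [if_pos hi, if_pos hj, abs_of_nonpos ((hS i j).1 (Or.inl ⟨hi, hj⟩))]; ring
  · rw [if_pos hi, if_neg hj, abs_of_nonneg ((hS i j).2 (Or.inl ⟨hi, hj⟩))]; ring
  · rw [if_neg hi, if_pos hj, abs_of_nonneg ((hS i j).2 (Or.inr ⟨hi, hj⟩))]; ring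
  · rw [if_neg hi, if_neg hj, abs_of_nonpos ((hS i j).1 (Or.inr ⟨hi, hj⟩))]; ring

lemma sign_mulVec {s w : Fin n → ℝ} (ε : ℝ) (hs : ∀ i, s i = 1 ∨ s i = -1)
    (hrepr : ∀ i j, A i j = ε * (s i * s j) * |A i j|) :
    A.mulVec (fun i => s i * w i) = fun i => ε * s i * ((absMat A).mulVec w i) := by
  funext i
  rw [mulVec_apply', mulVec_apply', Finset.mul_sum]
  refine Finset.sum_congr rfl fun j _ => ?_
  rw [hrepr i j, absMat_apply']
  rcases hs j with h | h <;> rw [h] <;> ring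

lemma absMat_mulVec_one (hrow : ∀ i, ∑ j, |A i j| = 1) :
    (absMat A).mulVec (fun _ => 1) = fun _ => 1 := by
  funext i
  rw [mulVec_apply']
  simp only [mul_one]
  exact hrow i

lemma oppBip_eigvec (hrow : ∀ i, ∑ j, |A i j| = 1) (h : OppBip A) :
    ∃ s : Fin n → ℝ, (∀ i, s i = 1 ∨ s i = -1) ∧ A.mulVec s = s := by
  obtain ⟨s, hs, hrepr⟩ := oppBip_sign h
  have hrepr' : ∀ i j, A i j = (1:ℝ) * (s i * s j) * |A i j| := by
    intro i j; rw [one_mul]; exact hrepr i j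
  refine ⟨s, hs, ?_⟩
  have := sign_mulVec (A := A) (w := fun _ => 1) 1 hs hrepr'
  simp only [mul_one] at this
  rw [this, absMat_mulVec_one hrow]
  funext i
  simp

lemma revOppBip_eigvec (hrow : ∀ i, ∑ j, |A i j| = 1) (h : RevOppBip A) :
    ∃ s : Fin n → ℝ, (∀ i, s i = 1 ∨ s i = -1) ∧ A.mulVec s = -s := by
  obtain ⟨s, hs, hrepr⟩ := revOppBip_sign h
  have hrepr' : ∀ i j, A i j = (-1:ℝ) * (s i * s j) * |A i j| := by
    intro i j; linear_combination hrepr i j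
  refine ⟨s, hs, ?_⟩
  have := sign_mulVec (A := A) (w := fun _ => 1) (-1) hs hrepr'
  simp only [mul_one] at this
  rw [this, absMat_mulVec_one hrow]
  funext i
  simp

lemma abs_const (hrow : ∀ i, ∑ j, |A i j| = 1) (hsc : StronglyConnected A)
    {v : Fin n → ℝ} (habs : ∀ i, ∑ j, |A i j| * |v j| = |v i|) :
    ∀ i j, |v i| = |v j| := by
  intro i j
  obtain ⟨i₀, -, hmax⟩ := Finset.exists_max_image Finset.univ (fun i => |v i|)
    ⟨i, Finset.mem_univ _⟩
  have step : ∀ a b, |v a| = |v i₀| → 0 < |A a b| → |v b| = |v i₀| := by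
    intro a b ha hab
    have h1 : ∑ l, |A a l| * (|v i₀| - |v l|) = 0 := by
      have : ∑ l, |A a l| * (|v i₀| - |v l|) = (∑ l, |A a l|) * |v i₀| - ∑ l, |A a l| * |v l| := by
        rw [Finset.sum_mul, ← Finset.sum_sub_distrib]
        refine Finset.sum_congr rfl fun l _ => ?_
        ring
      rw [this, hrow a, one_mul, habs a, ha, sub_self]
    have h2 : ∀ l ∈ Finset.univ, 0 ≤ |A a l| * (|v i₀| - |v l|) := fun l _ =>
      mul_nonneg (abs_nonneg _) (sub_nonneg.mpr (hmax l (Finset.mem_univ _)))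
    have h3 := (Finset.sum_eq_zero_iff_of_nonneg h2).mp h1 b (Finset.mem_univ _)
    rcases mul_eq_zero.mp h3 with h4 | h4
    · exact absurd h4 (ne_of_gt hab)
    · linarith [sub_eq_zero.mp h4]
  have prop : ∀ (k : ℕ) (a b : Fin n), |v a| = |v i₀| → 0 < (absMat A ^ k) a b →
      |v b| = |v i₀| := by
    intro k
    induction k with
    | zero =>
        intro a b ha hab
        rw [pow_zero, Matrix.one_apply] at hab
        split at hab
        · subst ‹a = b›; exact ha
        · exact absurd hab (lt_irrefl 0)
    | succ k ih =>
        intro a b ha hab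
        rw [pow_succ', Matrix.mul_apply] at hab
        obtain ⟨l, hl⟩ := pos_term_of_sum_pos
          (fun l => mul_nonneg (abs_nonneg _) (absMat_pow_nonneg A k l b)) hab
        have h6 : 0 ≤ (absMat A ^ k) l b := absMat_pow_nonneg A k l b
        have h7 : 0 ≤ |A a l| := abs_nonneg (A a l)
        have hl1 : 0 < |A a l| := by
          rcases mul_pos_iff.mp hl with ⟨x, -⟩ | ⟨-, y⟩
          · exact x
          · linarith
        have hl2 : 0 < (absMat A ^ k) l b := by
          rcases mul_pos_iff.mp hl with ⟨-, y⟩ | ⟨x, -⟩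
          · exact y
          · linarith
        exact ih l b (step a l ha hl1) hl2
  obtain ⟨k1, -, hk1⟩ := hsc i₀ i
  obtain ⟨k2, -, hk2⟩ := hsc i₀ j
  rw [prop k1 i₀ i rfl hk1, prop k2 i₀ j rfl hk2]

lemma oppBip_aperiodic_no_neg_eig (hsym : A.IsSymm) (hrow : ∀ i, ∑ j, |A i j| = 1)
    (hsc : StronglyConnected A) (hopp : OppBip A) (hap : Aperiodic A)
    {v : Fin n → ℝ} (hvne : v ≠ 0) (hv : A.mulVec v = -v) : False := by
  obtain ⟨s, hs, hrepr⟩ := oppBip_sign hopp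
  have hv' : A.mulVec v = (-1:ℝ) • v := by rw [neg_one_smul]; exact hv
  have hsign := eig_sign hsym hrow hsc (Or.inr rfl) hv' hvne
  have hpos := eig_abs_pos hsc hvne (eig_abs hsym hrow (Or.inr rfl) hv')
  set u : Fin n → ℝ := fun i => s i * v i with hu
  have hune : ∀ i, u i ≠ 0 := by
    intro i
    have h1 : v i ≠ 0 := abs_pos.mp (hpos i)
    rcases hs i with h | h <;> simp [hu, h, h1]
  have hedge : ∀ i j, 0 < |A i j| → u i * u j < 0 := by
    intro i j hij
    have hne : A i j ≠ 0 := abs_pos.mp hij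
    have h1 := hsign i j hne
    have h2 := hrepr i j
    have h3 : (s i * v i) * (s j * v j) * |A i j| < 0 := by
      have hh : (s i * v i) * (s j * v j) * |A i j| = (s i * s j * |A i j|) * (v i * v j) := by
        ring
      rw [hh, ← h2]
      linarith
    have h4 : (s i * v i) * (s j * v j) < 0 := by nlinarith [h3, hij]
    show u i * u j < 0
    simp only [hu]
    exact h4
  have hprop : ∀ (k : ℕ) (i j : Fin n), 0 < (absMat A ^ k) i j →
      ((0 < u i ↔ 0 < u j) ↔ Even k) := by
    intro k
    induction k with
    | zero =>
        intro i j hij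
        rw [pow_zero, Matrix.one_apply] at hij
        split at hij
        · subst ‹i = j›; simp
        · exact absurd hij (lt_irrefl 0)
    | succ k ih =>
        intro i j hij
        rw [pow_succ', Matrix.mul_apply] at hij
        obtain ⟨l, hl⟩ := pos_term_of_sum_pos
          (fun l => mul_nonneg (abs_nonneg _) (absMat_pow_nonneg A k l j)) hij
        have h6 : 0 ≤ (absMat A ^ k) l j := absMat_pow_nonneg A k l j
        have h7 : 0 ≤ |A i l| := abs_nonneg (A i l)
        have hl1 : 0 < |A i l| := by
          rcases mul_pos_iff.mp hl with ⟨x, -⟩ | ⟨-, y⟩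
          · exact x
          · linarith
        have hl2 : 0 < (absMat A ^ k) l j := by
          rcases mul_pos_iff.mp hl with ⟨-, y⟩ | ⟨x, -⟩
          · exact y
          · linarith
        have e1 := hedge i l hl1
        have e2 := ih l j hl2
        have e3 : ¬ (0 < u i ↔ 0 < u l) := by
          intro hiff
          rcases mul_neg_iff.mp e1 with ⟨h8, h9⟩ | ⟨h8, h9⟩
          · exact absurd (hiff.mp h8) (not_lt.mpr (le_of_lt h9))
          · exact absurd (hiff.mpr h9) (not_lt.mpr (le_of_lt h8))
        rw [Nat.even_add_one, ← e2]
        have hul := le_or_gt (u l) 0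
        tauto
  obtain ⟨i₀, -⟩ := Function.ne_iff.mp hvne
  have h2d : ∀ k, 1 ≤ k → 0 < (absMat A ^ k) i₀ i₀ → 2 ∣ k := by
    intro k hk1 hk
    have := (hprop k i₀ i₀ hk).mp Iff.rfl
    exact this.two_dvd
  have := hap i₀ 2 h2d
  norm_num at this

lemma periodic_neg_eig (hsym : A.IsSymm) (hrow : ∀ i, ∑ j, |A i j| = 1)
    (hsc : StronglyConnected A) (i₀ : Fin n) (d : ℕ)
    (hd : ∀ k, 1 ≤ k → 0 < (absMat A ^ k) i₀ i₀ → d ∣ k) (hd1 : d ≠ 1) :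
    ∃ w : Fin n → ℝ, (∀ i, w i = 1 ∨ w i = -1) ∧ (absMat A).mulVec w = -w := by
  classical
  have hM2 : 0 < (absMat A ^ 2) i₀ i₀ := by
    obtain ⟨j₁, hj₁⟩ := exists_pos_entry hrow i₀
    have hterm : 0 < absMat A i₀ j₁ * absMat A j₁ i₀ := by
      rw [absMat_apply', absMat_apply', hsym.apply i₀ j₁]
      exact mul_pos hj₁ hj₁
    have hle : absMat A i₀ j₁ * absMat A j₁ i₀ ≤ ∑ j, absMat A i₀ j * absMat A j i₀ :=
      Finset.single_le_sum (f := fun j => absMat A i₀ j * absMat A j i₀)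
        (fun j _ => mul_nonneg (absMat_nonneg A i₀ j) (absMat_nonneg A j i₀))
        (Finset.mem_univ j₁)
    rw [pow_two, Matrix.mul_apply]
    exact lt_of_lt_of_le hterm hle
  have hdvd2 : d ∣ 2 := hd 2 (by norm_num) hM2
  have hd2 : d = 2 := ((Nat.prime_two).eq_one_or_self_of_dvd d hdvd2).resolve_left hd1
  subst hd2
  have W : ∀ (k l : ℕ) (j : Fin n), 0 < (absMat A ^ k) i₀ j → 0 < (absMat A ^ l) i₀ j →
      (Even k ↔ Even l) := by
    intro k l j hk hl
    rcases Nat.eq_zero_or_pos (k + l) with h0 | hposkl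
    · obtain ⟨hk0, hl0⟩ := Nat.add_eq_zero.mp h0
      subst hk0; subst hl0; simp
    · have hterm : 0 < (absMat A ^ k) i₀ j * (absMat A ^ l) j i₀ := by
        rw [absMat_pow_symm hsym l j i₀]
        exact mul_pos hk hl
      have hle : (absMat A ^ k) i₀ j * (absMat A ^ l) j i₀ ≤
          ∑ m, (absMat A ^ k) i₀ m * (absMat A ^ l) m i₀ :=
        Finset.single_le_sum (f := fun m => (absMat A ^ k) i₀ m * (absMat A ^ l) m i₀)
          (fun m _ => mul_nonneg (absMat_pow_nonneg A k i₀ m)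
          (absMat_pow_nonneg A l m i₀)) (Finset.mem_univ j)
      have hklpos : 0 < (absMat A ^ (k + l)) i₀ i₀ := by
        rw [pow_add, Matrix.mul_apply]
        exact lt_of_lt_of_le hterm hle
      have h2 := hd (k + l) hposkl hklpos
      have h3 : Even (k + l) := (even_iff_two_dvd).mpr h2
      exact Nat.even_add.mp h3
  set T : Fin n → Prop := fun j => ∃ k, Even k ∧ 0 < (absMat A ^ k) i₀ j with hT
  set w : Fin n → ℝ := fun j => if T j then 1 else -1 with hw
  have hedge : ∀ i j, 0 < absMat A i j → w j = -(w i) := by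
    intro i j hij
    obtain ⟨k, hk1, hk⟩ := hsc i₀ i
    have hk1' : 0 < (absMat A ^ (k + 1)) i₀ j := by
      have hterm : 0 < (absMat A ^ k) i₀ i * absMat A i j := mul_pos hk hij
      have hle : (absMat A ^ k) i₀ i * absMat A i j ≤
          ∑ m, (absMat A ^ k) i₀ m * absMat A m j :=
        Finset.single_le_sum (f := fun m => (absMat A ^ k) i₀ m * absMat A m j)
          (fun m _ => mul_nonneg (absMat_pow_nonneg A k i₀ m)
          (absMat_nonneg A m j)) (Finset.mem_univ i)
      rw [pow_succ, Matrix.mul_apply]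
      exact lt_of_lt_of_le hterm hle
    by_cases hEk : Even k
    · have hTi : T i := ⟨k, hEk, hk⟩
      have hTj : ¬ T j := by
        rintro ⟨k', hEk', hk'⟩
        have h1 := W k' (k + 1) j hk' hk1'
        rw [Nat.even_add_one] at h1
        exact (h1.mp hEk') hEk
      simp [hw, hTi, hTj]
    · have hTj : T j := ⟨k + 1, Nat.even_add_one.mpr hEk, hk1'⟩
      have hTi : ¬ T i := by
        rintro ⟨k', hEk', hk'⟩
        exact hEk ((W k' k i hk' hk).mp hEk')
      simp [hw, hTi, hTj]
  refine ⟨w, fun i => by by_cases h : T i <;> simp [hw, h], ?_⟩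
  funext i
  rw [mulVec_apply']
  show ∑ j, absMat A i j * w j = -(w i)
  calc ∑ j, absMat A i j * w j = ∑ j, absMat A i j * (-(w i)) := by
        refine Finset.sum_congr rfl fun j _ => ?_
        rcases lt_or_ge 0 (absMat A i j) with h | h
        · rw [hedge i j h]
        · have h0 : absMat A i j = 0 := le_antisymm h (abs_nonneg _)
          rw [h0, zero_mul, zero_mul]
    _ = (∑ j, absMat A i j) * (-(w i)) := by rw [Finset.sum_mul]
    _ = -(w i) := by
        have : ∑ j, absMat A i j = 1 := hrow i
        rw [this, one_mul]

lemma pow_mulVec_neg {w : Fin n → ℝ} (hw : A.mulVec w = -w) (t : ℕ) :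
    (A ^ t).mulVec w = ((-1 : ℝ) ^ t) • w := by
  induction t with
  | zero => simp [Matrix.one_mulVec]
  | succ t ih =>
      rw [pow_succ, ← Matrix.mulVec_mulVec, hw]
      rw [Matrix.mulVec_neg, ih]
      funext i
      simp [pow_succ]

lemma pow_mulVec_fixed {w : Fin n → ℝ} (hw : A.mulVec w = w) (t : ℕ) :
    (A ^ t).mulVec w = w := by
  induction t with
  | zero => simp [Matrix.one_mulVec]
  | succ t ih => rw [pow_succ, ← Matrix.mulVec_mulVec, hw, ih]

lemma alt_not_tendsto {w : Fin n → ℝ} (hw : w ≠ 0) (L : Fin n → ℝ) :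
    ¬ Tendsto (fun t : ℕ => ((-1 : ℝ) ^ t) • w) atTop (nhds L) := by
  intro h
  have h2 : Tendsto (fun t : ℕ => 2 * t) atTop atTop :=
    Filter.tendsto_atTop_mono (fun t => Nat.le_mul_of_pos_left t (by norm_num : (0:ℕ) < 2))
      tendsto_id
  have h3 : Tendsto (fun t : ℕ => 2 * t + 1) atTop atTop :=
    Filter.tendsto_atTop_mono
      (fun t => ((Nat.le_mul_of_pos_left t (by norm_num : (0:ℕ) < 2)).trans (Nat.le_succ _)))
      tendsto_id
  have he := h.comp h2
  have ho := h.comp h3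
  simp only [Function.comp_def] at he ho
  have hfe : (fun t : ℕ => ((-1 : ℝ) ^ (2 * t)) • w) = fun _ : ℕ => w := by
    funext t
    rw [pow_mul, neg_one_sq, one_pow, one_smul]
  have hfo : (fun t : ℕ => ((-1 : ℝ) ^ (2 * t + 1)) • w) = fun _ : ℕ => -w := by
    funext t
    rw [pow_succ, pow_mul, neg_one_sq, one_pow, one_mul, neg_one_smul]
  rw [hfe] at he
  rw [hfo] at ho
  have hLw : L = w := tendsto_nhds_unique he tendsto_const_nhds
  have hLnw : L = -w := tendsto_nhds_unique ho tendsto_const_nhds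
  obtain ⟨i, hi⟩ := Function.ne_iff.mp hw
  have : w i = -(w i) := by
    have h4 := congrFun hLw i
    have h5 := congrFun hLnw i
    rw [h4] at h5
    simpa using h5
  simp only [Pi.zero_apply] at hi
  apply hi
  linarith

lemma limit_fixed {b L : Fin n → ℝ} (h : Tendsto (fun t => (A ^ t).mulVec b) atTop (nhds L)) :
    A.mulVec L = L := by
  have hc : Continuous (A.mulVec : (Fin n → ℝ) → (Fin n → ℝ)) := by
    exact Continuous.matrix_mulVec continuous_const continuous_id
  have h1 : Tendsto (fun t => A.mulVec ((A ^ t).mulVec b)) atTop (nhds (A.mulVec L)) :=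
    (hc.tendsto L).comp h
  have h2 : (fun t => A.mulVec ((A ^ t).mulVec b)) = fun t => (A ^ (t + 1)).mulVec b := by
    funext t
    rw [Matrix.mulVec_mulVec, ← pow_succ']
  rw [h2] at h1
  have h3 : Tendsto (fun t => (A ^ (t + 1)).mulVec b) atTop (nhds L) :=
    h.comp (tendsto_add_atTop_nat 1)
  exact tendsto_nhds_unique h1 h3

lemma conv (hsym : A.IsSymm) (hrow : ∀ i, ∑ j, |A i j| = 1)
    (hneg : ∀ v : Fin n → ℝ, A.mulVec v = -v → v = 0) (b : Fin n → ℝ) :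
    ∃ L : Fin n → ℝ, Tendsto (fun t => (A ^ t).mulVec b) atTop (nhds L) := by
  classical
  have hA : A.IsHermitian := by
    refine Matrix.IsHermitian.ext fun i j => ?_
    rw [star_trivial]
    exact hsym.apply i j
  set B := hA.eigenvectorBasis with hB
  set μ := hA.eigenvalues with hμ
  have hBev : ∀ k, A.mulVec (B k) = μ k • (B k : Fin n → ℝ) := fun k =>
    hA.mulVec_eigenvectorBasis k
  have hBne : ∀ k, (B k : Fin n → ℝ) ≠ 0 := by
    intro k h
    exact B.orthonormal.ne_zero k ((WithLp.ofLp_eq_zero 2).mp h)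
  have hbound : ∀ k, |μ k| ≤ 1 := fun k => eig_bound hrow (μ k) (B k) (hBne k) (hBev k)
  have hne : ∀ k, μ k ≠ -1 := by
    intro k hk
    apply hBne k
    apply hneg
    rw [hBev k, hk]
    funext i
    simp
  have hlim : ∀ k, ∃ l : ℝ, Tendsto (fun t : ℕ => μ k ^ t) atTop (nhds l) := by
    intro k
    rcases eq_or_ne (μ k) 1 with h1 | h1
    · exact ⟨1, by simp [h1]⟩
    · refine ⟨0, tendsto_pow_atTop_nhds_zero_of_abs_lt_one ?_⟩
      rcases lt_or_eq_of_le (hbound k) with h | h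
      · exact h
      · exfalso
        rcases abs_eq (by norm_num : (0:ℝ) ≤ 1) |>.mp h with h2 | h2
        · exact h1 h2
        · exact hne k h2
  choose l hl using hlim
  have hpow : ∀ (t : ℕ) (k : Fin n), (A ^ t).mulVec (B k) = (μ k ^ t) • (B k : Fin n → ℝ) := by
    intro t k
    induction t with
    | zero => simp [Matrix.one_mulVec]
    | succ t ih =>
        rw [pow_succ', ← Matrix.mulVec_mulVec, ih, Matrix.mulVec_smul, hBev k, smul_smul,
          ← pow_succ]
  have hb : b = ∑ k, B.repr (WithLp.toLp 2 b) k • (B k : Fin n → ℝ) := by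
    conv_lhs => rw [← WithLp.ofLp_toLp (p := 2) b, ← B.sum_repr (WithLp.toLp 2 b)]
    rw [WithLp.ofLp_sum]; simp only [WithLp.ofLp_smul]
  have hdecomp : ∀ t, (A ^ t).mulVec b = ∑ k, (B.repr (WithLp.toLp 2 b) k * μ k ^ t) • (B k : Fin n → ℝ) := by
    intro t
    have step : (A ^ t).mulVec b = Matrix.mulVecLin (A ^ t) (∑ k, B.repr (WithLp.toLp 2 b) k • (B k : Fin n → ℝ)) := by
      rw [← hb]; rfl
    rw [step, map_sum]
    refine Finset.sum_congr rfl fun k _ => ?_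
    rw [map_smul]
    have : Matrix.mulVecLin (A ^ t) (B k : Fin n → ℝ) = (μ k ^ t) • (B k : Fin n → ℝ) := hpow t k
    rw [this, smul_smul]
  refine ⟨∑ k, (B.repr (WithLp.toLp 2 b) k * l k) • (B k : Fin n → ℝ), ?_⟩
  have heq : (fun t => (A ^ t).mulVec b) =
      fun t => ∑ k, (B.repr (WithLp.toLp 2 b) k * μ k ^ t) • (B k : Fin n → ℝ) := funext hdecomp
  rw [heq]
  apply tendsto_finset_sum
  intro k _
  exact (((hl k).const_mul (B.repr (WithLp.toLp 2 b) k)).smul_const (B k : Fin n → ℝ))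


end Stmt12Aux

/-- full trichotomy for strongly connected signed interaction
matrices. -/
theorem stmt_12 (n : ℕ) (hn : 2 ≤ n) (A : Matrix (Fin n) (Fin n) ℝ)
    (hsym : A.IsSymm) (hdiag : ∀ i, A i i = 0) (hrow : ∀ i, ∑ j, |A i j| = 1)
    (hsc : StronglyConnected A) :
    (InducesNontrivialPolarization A ↔ (OppBip A ∧ Aperiodic A)) ∧
    (Divergent A ↔ RevOppBip A) ∧
    (NeutralConsensus A ↔ (¬ OppBip A ∧ ¬ RevOppBip A)) := by
  classical
  have i0 : Fin n := ⟨0, by omega⟩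
  have hsignne : ∀ s : Fin n → ℝ, (∀ i, s i = 1 ∨ s i = -1) → s ≠ 0 := by
    intro s hs h
    have h1 := congrFun h i0
    simp only [Pi.zero_apply] at h1
    rcases hs i0 with h2 | h2 <;> rw [h2] at h1 <;> norm_num at h1
  have hconv_of_not_rev : ¬ RevOppBip A →
      ∀ b, ∃ L, Tendsto (fun t => (A ^ t).mulVec b) atTop (nhds L) := by
    intro hrev b
    apply conv hsym hrow ?_ b
    intro v hv
    by_contra hvne
    exact hrev (eig_revOppBip hsym hrow hsc hvne hv)
  have hdiv_iff : Divergent A ↔ RevOppBip A := by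
    constructor
    · intro hdiv
      by_contra hrev
      obtain ⟨b₀, hb₀⟩ := hdiv
      exact hb₀ (hconv_of_not_rev hrev b₀)
    · intro hrev
      obtain ⟨s, hs, hAs⟩ := revOppBip_eigvec hrow hrev
      refine ⟨s, ?_⟩
      rintro ⟨L, hL⟩
      rw [funext (pow_mulVec_neg hAs)] at hL
      exact alt_not_tendsto (hsignne s hs) L hL
  have hpol_iff : InducesNontrivialPolarization A ↔ (OppBip A ∧ Aperiodic A) := by
    constructor
    · rintro ⟨huniv, b₀, L, hL, hLne⟩
      have hAL : A.mulVec L = L := limit_fixed hL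
      have hopp : OppBip A := eig_oppBip hsym hrow hsc hLne hAL
      refine ⟨hopp, ?_⟩
      by_contra hap
      unfold Aperiodic at hap
      push_neg at hap
      obtain ⟨i, d, hd, hd1⟩ := hap
      obtain ⟨w, hw, hMw⟩ := periodic_neg_eig hsym hrow hsc i d hd hd1
      obtain ⟨s, hs, hrepr⟩ := oppBip_sign hopp
      have hrepr' : ∀ i j, A i j = (1:ℝ) * (s i * s j) * |A i j| := fun i j => by
        rw [one_mul]; exact hrepr i j
      have hv : A.mulVec (fun i => s i * w i) = -(fun i => s i * w i) := by
        rw [sign_mulVec 1 hs hrepr']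
        funext i
        have h3 := congrFun hMw i
        simp only [Pi.neg_apply] at h3 ⊢
        rw [one_mul, h3]
        ring
      have hvne : (fun i => s i * w i) ≠ 0 := by
        intro h
        have h4 := congrFun h i0
        simp only [Pi.zero_apply] at h4
        rcases hs i0 with h1 | h1 <;> rcases hw i0 with h2 | h2 <;>
          rw [h1, h2] at h4 <;> norm_num at h4
      obtain ⟨L', hL', -⟩ := huniv (fun i => s i * w i)
      rw [funext (pow_mulVec_neg hv)] at hL'
      exact alt_not_tendsto hvne L' hL'
    · rintro ⟨hopp, hap⟩
      have hconv : ∀ b, ∃ L, Tendsto (fun t => (A ^ t).mulVec b) atTop (nhds L) := by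
        apply conv hsym hrow
        intro v hv
        by_contra hvne
        exact oppBip_aperiodic_no_neg_eig hsym hrow hsc hopp hap hvne hv
      constructor
      · intro b₀
        obtain ⟨L, hL⟩ := hconv b₀
        refine ⟨L, hL, ?_⟩
        have hAL : A.mulVec L = L := limit_fixed hL
        rcases eq_or_ne L 0 with h0 | h0
        · exact ⟨0, 0, fun i => Or.inl (by rw [h0]; rfl)⟩
        · have habs := eig_abs hsym hrow (Or.inl rfl)
            (by rw [one_smul]; exact hAL : A.mulVec L = (1:ℝ) • L)
          have hconst := abs_const hrow hsc habs
          refine ⟨|L i0|, -|L i0|, fun i => ?_⟩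
          have h5 := hconst i i0
          rcases abs_cases (L i) with ⟨h1, -⟩ | ⟨h1, -⟩
          · left; rw [← h5]; exact h1.symm
          · right; rw [← h5]; linarith
      · obtain ⟨s, hs, hAs⟩ := oppBip_eigvec hrow hopp
        refine ⟨s, s, ?_, hsignne s hs⟩
        rw [funext (pow_mulVec_fixed hAs)]
        exact tendsto_const_nhds
  have hneu_iff : NeutralConsensus A ↔ (¬ OppBip A ∧ ¬ RevOppBip A) := by
    constructor
    · intro hneu
      constructor
      · intro hopp
        obtain ⟨s, hs, hAs⟩ := oppBip_eigvec hrow hopp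
        have h1 := hneu s
        rw [funext (pow_mulVec_fixed hAs)] at h1
        exact hsignne s hs (tendsto_nhds_unique tendsto_const_nhds h1)
      · intro hrev
        obtain ⟨s, hs, hAs⟩ := revOppBip_eigvec hrow hrev
        have h1 := hneu s
        rw [funext (pow_mulVec_neg hAs)] at h1
        exact alt_not_tendsto (hsignne s hs) 0 h1
    · rintro ⟨hopp, hrev⟩
      intro b₀
      obtain ⟨L, hL⟩ := hconv_of_not_rev hrev b₀
      have hAL := limit_fixed hL
      rcases eq_or_ne L 0 with h0 | h0
      · rw [h0] at hL; exact hL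
      · exact absurd (eig_oppBip hsym hrow hsc h0 hAL) hopp
  exact ⟨hpol_iff, hdiv_iff, hneu_iff⟩
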